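/- There exists a constant C > 0 such that |√(Λᵃ(η)) − η| ≤ C·η⁵ for every η ∈ [0, π]; in other words, the acoustic dispersion relation λᵃ(η) = √(Λᵃ(η)) approximates the continuous dispersion relation η with error of order η⁵. -/

import Mathlib

open Real

open Complex Finset in
theorem cos_bound6 {x : ℝ} (hx : |x| ≤ 1) :
    |Real.cos x - (1 - x ^ 2 / 2 + x ^ 4 / 24)| ≤ |x| ^ 6 * (7 / 4320) := by
  have hsum : ∀ z : ℂ, ∑ m ∈ range 6, z ^ m / m.factorial
      = 1 + z + z^2/2 + z^3/6 + z^4/24 + z^5/120 := by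
    intro z
    simp [Finset.sum_range_succ, Nat.factorial]
  have key : (Complex.cos x - ((1 : ℂ) - (x:ℂ) ^ 2 / 2 + (x:ℂ) ^ 4 / 24))
      = ((Complex.exp (x * I) - ∑ m ∈ range 6, ((x:ℂ) * I) ^ m / m.factorial)
        + (Complex.exp (-x * I) - ∑ m ∈ range 6, (-(x:ℂ) * I) ^ m / m.factorial)) / 2 := by
    rw [hsum, hsum, Complex.cos]
    ring_nf
    linear_combination ((x:ℂ)^2 * (1/2) + (x:ℂ)^4 * (I^2 - 1) / 24) * Complex.I_sq
  have h1 : ‖Complex.exp (x * I) - ∑ m ∈ range 6, ((x:ℂ) * I) ^ m / m.factorial‖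
      ≤ ‖(x:ℂ) * I‖ ^ 6 * ((7 : ℝ) * ((720 : ℝ) * 6)⁻¹) := by
    have := Complex.exp_bound (x := (x:ℂ) * I) (by simpa using hx) (n := 6) (by norm_num)
    simpa [Nat.factorial] using this
  have h2 : ‖Complex.exp (-x * I) - ∑ m ∈ range 6, (-(x:ℂ) * I) ^ m / m.factorial‖
      ≤ ‖-(x:ℂ) * I‖ ^ 6 * ((7 : ℝ) * ((720 : ℝ) * 6)⁻¹) := by
    have := Complex.exp_bound (x := -(x:ℂ) * I) (by simpa using hx) (n := 6) (by norm_num)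
    simpa [Nat.factorial] using this
  have habs : ‖(x:ℂ) * I‖ = |x| := by simp
  have habs' : ‖-(x:ℂ) * I‖ = |x| := by simp
  calc |Real.cos x - (1 - x ^ 2 / 2 + x ^ 4 / 24)|
      = ‖Complex.cos x - ((1:ℂ) - (x:ℂ) ^ 2 / 2 + (x:ℂ) ^ 4 / 24)‖ := by
        rw [← Real.norm_eq_abs, ← Complex.norm_real]
        congr 1
        push_cast [Complex.ofReal_cos]
        ring
    _ = ‖((Complex.exp (x * I) - ∑ m ∈ range 6, ((x:ℂ) * I) ^ m / m.factorial)
        + (Complex.exp (-x * I) - ∑ m ∈ range 6, (-(x:ℂ) * I) ^ m / m.factorial)) / 2‖ := by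
        rw [key]
    _ ≤ (‖Complex.exp (x * I) - ∑ m ∈ range 6, ((x:ℂ) * I) ^ m / m.factorial‖
        + ‖Complex.exp (-x * I) - ∑ m ∈ range 6, (-(x:ℂ) * I) ^ m / m.factorial‖) / 2 := by
        rw [norm_div]
        simp only [Complex.norm_two]
        gcongr
        exact norm_add_le _ _
    _ ≤ |x| ^ 6 * (7 / 4320) := by
        rw [habs] at h1; rw [habs'] at h2
        norm_num at h1 h2 ⊢
        linarith

private lemma aux_L10 {s t c L : ℝ} (hs1 : s ^ 2 ≤ 1) (ht1 : 1 ≤ t) (hc0 : 0 ≤ c ^ 2)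
    (hL0 : 0 ≤ L) (hLD : L * (11 + 4 * c ^ 2 + t) = 120 * s ^ 2) : L ≤ 10 := by
  nlinarith

private lemma aux_F {η e : ℝ} (hη0 : 0 ≤ η) (hle1 : η ≤ 1) (he : |e| ≤ η ^ 6 * (7 / 4320)) :
    |(-η ^ 6 / 12 - η ^ 8 / 48 - (240 + 16 * η ^ 2 + η ^ 4) / 2 * e)| ≤ η ^ 6 := by
  have he1 : e ≤ η ^ 6 * (7 / 4320) := le_of_abs_le he
  have he2 : -(η ^ 6 * (7 / 4320)) ≤ e := neg_le_of_abs_le he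
  have hη8 : η ^ 8 ≤ η ^ 6 := pow_le_pow_of_le_one hη0 hle1 (by norm_num)
  have hη10 : η ^ 10 ≤ η ^ 6 := pow_le_pow_of_le_one hη0 hle1 (by norm_num)
  have h6 : (0:ℝ) ≤ η ^ 6 := by positivity
  have hPe1 : (240 + 16 * η ^ 2 + η ^ 4) / 2 * e
      ≤ (240 + 16 * η ^ 2 + η ^ 4) / 2 * (η ^ 6 * (7 / 4320)) :=
    mul_le_mul_of_nonneg_left he1 (by positivity)
  have hPe2 : (240 + 16 * η ^ 2 + η ^ 4) / 2 * (-(η ^ 6 * (7 / 4320)))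
      ≤ (240 + 16 * η ^ 2 + η ^ 4) / 2 * e :=
    mul_le_mul_of_nonneg_left he2 (by positivity)
  have hPM : (240 + 16 * η ^ 2 + η ^ 4) / 2 * (η ^ 6 * (7 / 4320))
      ≤ 257 / 2 * (7 / 4320) * η ^ 6 := by nlinarith
  rw [abs_le]
  constructor <;> nlinarith

private lemma aux_B {η s c L : ℝ} (hη0 : 0 ≤ η) (hle1 : η ≤ 1) (hs1 : s ^ 2 ≤ 1)
    (hc0 : 0 ≤ c ^ 2) (hL0 : 0 ≤ L) (hL10 : L ≤ 10) :
    (1 + s ^ 2) * (η ^ 2 + L) - (44 + 16 * c ^ 2) ≤ -4 := by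
  nlinarith

noncomputable def Delta (η : ℝ) : ℝ :=
  1 + 268 * Real.cos (η / 2) ^ 2 - 44 * Real.cos (η / 2) ^ 4

noncomputable def Lama (η : ℝ) : ℝ :=
  120 * Real.sin (η / 2) ^ 2 / (11 + 4 * Real.cos (η / 2) ^ 2 + Real.sqrt (Delta η))

set_option maxHeartbeats 1000000 in
theorem stmt_1 :
    ∃ C > (0 : ℝ), ∀ η ∈ Set.Icc (0 : ℝ) Real.pi,
      |Real.sqrt (Lama η) - η| ≤ C * η ^ 5 := by
  refine ⟨100, by norm_num, ?_⟩
  rintro η ⟨hη0, hηπ⟩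
  set s := Real.sin (η / 2) with hs
  set c := Real.cos (η / 2) with hc
  have hsc : s ^ 2 + c ^ 2 = 1 := Real.sin_sq_add_cos_sq _
  have hc0 : (0:ℝ) ≤ c ^ 2 := sq_nonneg c
  have hc1 : c ^ 2 ≤ 1 := by nlinarith [sq_nonneg s]
  have hs1 : s ^ 2 ≤ 1 := by nlinarith
  have hΔ : Delta η = 1 + 268 * c ^ 2 - 44 * c ^ 4 := rfl
  have hΔ1 : 1 ≤ Delta η := by rw [hΔ]; nlinarith
  have hΔ225 : Delta η ≤ 225 := by rw [hΔ]; nlinarith [sq_nonneg (1 - c^2)]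
  set t := Real.sqrt (Delta η) with htdef
  have ht1 : 1 ≤ t := by
    rw [htdef, show (1:ℝ) = Real.sqrt 1 by rw [Real.sqrt_one]]
    exact Real.sqrt_le_sqrt hΔ1
  have ht15 : t ≤ 15 := by
    rw [htdef, show (15:ℝ) = Real.sqrt 225 by
      rw [show (225:ℝ) = 15 ^ 2 by norm_num, Real.sqrt_sq]; norm_num]
    exact Real.sqrt_le_sqrt hΔ225
  have ht2 : t ^ 2 = 1 + 268 * c ^ 2 - 44 * c ^ 4 := by
    rw [htdef, Real.sq_sqrt (by linarith : (0:ℝ) ≤ Delta η)]; exact hΔ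
  have hDpos : (0:ℝ) < 11 + 4 * c ^ 2 + t := by linarith
  have hLama : Lama η = 120 * s ^ 2 / (11 + 4 * c ^ 2 + t) := rfl
  rw [hLama]
  set L := 120 * s ^ 2 / (11 + 4 * c ^ 2 + t) with hL
  have hLD : L * (11 + 4 * c ^ 2 + t) = 120 * s ^ 2 := by
    rw [hL]; field_simp
  have hL0 : 0 ≤ L := by
    rw [hL]; positivity
  clear_value t L
  have hL10 : L ≤ 10 := aux_L10 hs1 ht1 hc0 hL0 hLD
  have hsqL : Real.sqrt L ^ 2 = L := Real.sq_sqrt hL0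
  have hsqL0 : 0 ≤ Real.sqrt L := Real.sqrt_nonneg L
  rcases le_or_gt η 1 with hle1 | hgt1
  · rcases eq_or_lt_of_le hη0 with h0 | hpos
    · have hs0 : s = 0 := by rw [hs, ← h0]; norm_num
      have hL0' : L = 0 := by
        have := hLD
        rw [hs0] at this
        have h2 : L * (11 + 4 * c ^ 2 + t) = 0 := by rw [this]; ring
        exact (mul_eq_zero.mp h2).resolve_right (ne_of_gt hDpos)
      rw [← h0, hL0']
      simp
    · have hquad : (1 + s ^ 2) * L ^ 2 - (44 + 16 * c ^ 2) * L + 240 * s ^ 2 = 0 := by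
        have h2 : ((1 + s ^ 2) * L ^ 2 - (44 + 16 * c ^ 2) * L + 240 * s ^ 2)
            * (11 + 4 * c ^ 2 + t) ^ 2 = 0 := by
          linear_combination ((1 + s^2) * (L * (11 + 4*c^2 + t) + 120 * s^2)
              - (44 + 16*c^2) * (11 + 4*c^2 + t)) * hLD
            + 240 * s^2 * ht2 + 14400 * s^2 * (s^2 - c^2 + 2) * hsc
        have hne : (11 + 4 * c ^ 2 + t) ^ 2 ≠ 0 := pow_ne_zero _ (ne_of_gt hDpos)
        exact (mul_eq_zero.mp h2).resolve_right hne
      have hfac : (η ^ 2 - L) * ((1 + s ^ 2) * (η ^ 2 + L) - (44 + 16 * c ^ 2))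
          = (1 + s ^ 2) * η ^ 4 - (44 + 16 * c ^ 2) * η ^ 2 + 240 * s ^ 2 := by
        linear_combination -hquad
      have hs2 : s ^ 2 = 1 / 2 - Real.cos η / 2 := by
        have h1 := Real.cos_sq (η / 2)
        have h2 : 2 * (η / 2) = η := by ring
        rw [h2] at h1
        nlinarith
      set e := Real.cos η - (1 - η ^ 2 / 2 + η ^ 4 / 24) with hedef
      have hcb := cos_bound6 (x := η) (by rw [abs_of_nonneg hη0]; exact hle1)
      rw [← hedef, abs_of_nonneg hη0] at hcb
      have hFe : (1 + s ^ 2) * η ^ 4 - (44 + 16 * c ^ 2) * η ^ 2 + 240 * s ^ 2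
          = -η ^ 6 / 12 - η ^ 8 / 48 - (240 + 16 * η ^ 2 + η ^ 4) / 2 * e := by
        have hc2 : c ^ 2 = 1 - s ^ 2 := by linarith
        rw [hc2, hs2, hedef]
        ring
      have hF : |(1 + s ^ 2) * η ^ 4 - (44 + 16 * c ^ 2) * η ^ 2 + 240 * s ^ 2| ≤ η ^ 6 := by
        rw [hFe]
        exact aux_F hη0 hle1 hcb
      have hB : (1 + s ^ 2) * (η ^ 2 + L) - (44 + 16 * c ^ 2) ≤ -4 :=
        aux_B hη0 hle1 hs1 hc0 hL0 hL10
      have habsL : |η ^ 2 - L| ≤ η ^ 6 / 4 := by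
        have h4 : (4:ℝ) ≤ -((1 + s ^ 2) * (η ^ 2 + L) - (44 + 16 * c ^ 2)) := by linarith
        have step : |η ^ 2 - L| * 4
            ≤ |η ^ 2 - L| * (-((1 + s ^ 2) * (η ^ 2 + L) - (44 + 16 * c ^ 2))) :=
          mul_le_mul_of_nonneg_left h4 (abs_nonneg _)
        have heq : |η ^ 2 - L| * (-((1 + s ^ 2) * (η ^ 2 + L) - (44 + 16 * c ^ 2)))
            = |(η ^ 2 - L) * ((1 + s ^ 2) * (η ^ 2 + L) - (44 + 16 * c ^ 2))| := by
          rw [abs_mul, abs_of_nonpos (by linarith : (1 + s ^ 2) * (η ^ 2 + L)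
            - (44 + 16 * c ^ 2) ≤ 0)]
        rw [heq, hfac] at step
        linarith [hF]
      have hmul : |Real.sqrt L - η| * η ≤ η ^ 6 / 4 := by
        have h1 : |Real.sqrt L - η| * η ≤ |Real.sqrt L - η| * (Real.sqrt L + η) := by
          apply mul_le_mul_of_nonneg_left _ (abs_nonneg _)
          linarith
        have h2 : |Real.sqrt L - η| * (Real.sqrt L + η)
            = |(Real.sqrt L - η) * (Real.sqrt L + η)| := by
          rw [abs_mul, abs_of_nonneg (by linarith : (0:ℝ) ≤ Real.sqrt L + η)]
        have h3 : (Real.sqrt L - η) * (Real.sqrt L + η) = -(η ^ 2 - L) := by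
          linear_combination hsqL
        rw [h2, h3, abs_neg] at h1
        linarith [habsL]
      have hfin : |Real.sqrt L - η| ≤ η ^ 5 / 4 := by
        have h5 : |Real.sqrt L - η| * η ≤ (η ^ 5 / 4) * η := by
          calc |Real.sqrt L - η| * η ≤ η ^ 6 / 4 := hmul
            _ = (η ^ 5 / 4) * η := by ring
        exact le_of_mul_le_mul_right h5 hpos
      have h5 : (0:ℝ) ≤ η ^ 5 := by positivity
      linarith
  · have hπ : Real.pi < 3.15 := Real.pi_lt_d2
    have hsL4 : Real.sqrt L ≤ 4 := by
      rw [show (4:ℝ) = Real.sqrt 16 by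
        rw [show (16:ℝ) = 4 ^ 2 by norm_num, Real.sqrt_sq]; norm_num]
      exact Real.sqrt_le_sqrt (by linarith)
    have hpow : (1:ℝ) ≤ η ^ 5 := one_le_pow₀ hgt1.le
    have h8 : |Real.sqrt L - η| ≤ 8 := by
      rw [abs_le]; constructor <;> linarith
    have h100 : (100:ℝ) ≤ 100 * η ^ 5 := by linarith
    linarith
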